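/- arXiv:1106.5914 — 4 statements merged into one kernel-verified Lean document; each statement's English description precedes it below -/
import Mathlib

section
/- Fix h ∈ ℝ and let R_h : ℂ → ℂ be the skew rotation with center 0, R_h(z) = z·exp(i·h/|z|) for z ≠ 0. Then R_h is a perturbed skew rotation in the inverse polar coordinates centered at 1; precisely, along the cobounded filter of ℂ: (i) the function z ↦ arg((R_h(z) − 1)/(z − 1)) − h·|z − 1|^{−1} is big-O of z ↦ |z|^{−2}, and (ii) the function z ↦ |R_h(z) − 1|^{−1} − |z − 1|^{−1} is big-O of z ↦ |z|^{−3}. -/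
open Asymptotics

/-- The skew rotation with center `F` and angular speed `h`:
`z ↦ F + (z − F)·exp(i·h/|z − F|)` for `z ≠ F`, and `F ↦ F`. -/
noncomputable def skewRot (F : ℂ) (h : ℝ) (z : ℂ) : ℂ :=
  if z = F then F
  else F + (z - F) * Complex.exp (Complex.I * ((h / ‖z - F‖ : ℝ) : ℂ))

set_option maxHeartbeats 1000000 in
lemma skewRot_aux (h : ℝ) (z : ℂ) (hz : 2 * |h| + 2 ≤ ‖z‖) :
    |Complex.arg ((skewRot 0 h z - 1) / (z - 1)) - h * (‖z - 1‖)⁻¹|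
        ≤ (18 * |h|) * ((‖z‖) ^ 2)⁻¹ ∧
    |(‖skewRot 0 h z - 1‖)⁻¹ - (‖z - 1‖)⁻¹|
        ≤ (8 * |h|) * ((‖z‖) ^ 3)⁻¹ := by
  have hh : (0:ℝ) ≤ |h| := abs_nonneg h
  set n : ℝ := ‖z‖ with hn_def
  have hn2 : (2:ℝ) ≤ n := by linarith
  have hn0 : (0:ℝ) < n := by linarith
  have hz0 : z ≠ 0 := norm_pos_iff.mp hn0
  set θ : ℝ := h / n with hθ_def
  have hθn : |θ| = |h| / n := by rw [hθ_def, abs_div, abs_of_pos hn0]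
  have hθ : |θ| ≤ 1 / 2 := by
    rw [hθn, div_le_iff₀ hn0]; linarith
  set E : ℂ := Complex.exp (Complex.I * (θ : ℂ)) with hE_def
  set F : ℂ := Complex.exp (Complex.I * ((-θ : ℝ) : ℂ)) with hF_def
  have hEF : E * F = 1 := by
    rw [hE_def, hF_def, ← Complex.exp_add]
    push_cast
    ring_nf
    exact Complex.exp_zero
  have habsE : ‖E‖ = 1 := by
    rw [hE_def, Complex.norm_exp]; simp
  have habsF : ‖F‖ = 1 := by
    rw [hF_def, Complex.norm_exp]; simp
  have hE0 : E ≠ 0 := Complex.exp_ne_zero _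
  have hskew : skewRot 0 h z = z * E := by
    rw [skewRot, if_neg hz0]
    simp only [sub_zero, zero_add, hE_def, hθ_def, hn_def]
  have hE1 : ‖E - 1‖ ≤ 2 * |θ| := by
    have h1 : ‖Complex.I * (θ : ℂ)‖ = |θ| := by
      simp
    have := Complex.norm_exp_sub_one_le (x := Complex.I * (θ : ℂ)) (by rw [h1]; linarith)
    rwa [h1] at this
  have hF1 : ‖F - 1‖ ≤ 2 * |θ| := by
    have h1 : ‖Complex.I * ((-θ : ℝ) : ℂ)‖ = |θ| := by
      simp
    have := Complex.norm_exp_sub_one_le (x := Complex.I * ((-θ : ℝ) : ℂ)) (by rw [h1]; linarith)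
    rwa [h1] at this
  set a : ℝ := ‖z - 1‖ with ha_def
  have h_an : |a - n| ≤ 1 := by
    have := abs_norm_sub_norm_le (z - 1) z
    simpa [← ha_def, ← hn_def] using this
  have ha : n / 2 ≤ a := by
    rcases abs_le.mp h_an with ⟨h1, _⟩; linarith
  have ha0 : (0:ℝ) < a := by linarith
  have hz1' : z - 1 ≠ 0 := norm_ne_zero_iff.mp (by rw [← ha_def]; exact ha0.ne')
  have hz1 : z ≠ 1 := sub_ne_zero.mp hz1'
  constructor
  · -- angular part
    set w : ℂ := (1 - F) / (z - 1) with hw_def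
    have hratio : (z * E - 1) / (z - 1) = E * (1 + w) := by
      rw [hw_def]
      field_simp
      linear_combination hEF
    have hw : ‖w‖ * a ≤ 2 * |θ| := by
      rw [hw_def, norm_div, ← ha_def, div_mul_cancel₀ _ ha0.ne']
      calc ‖1 - F‖ = ‖F - 1‖ := by
            rw [show (1:ℂ) - F = -(F - 1) from by ring, norm_neg]
        _ ≤ 2 * |θ| := hF1
    have hw_mul : ‖w‖ * n ^ 2 ≤ 4 * |h| := by
      have h1 : ‖w‖ * a * n ≤ 2 * |h| := by
        calc ‖w‖ * a * n ≤ (2 * |θ|) * n :=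
              mul_le_mul_of_nonneg_right hw hn0.le
          _ = 2 * |h| := by rw [hθn]; field_simp
      nlinarith [norm_nonneg w, hn0, ha]
    have hw12 : ‖w‖ ≤ 1 / 2 := by
      nlinarith [norm_nonneg w, sq_nonneg (|h| - 1)]
    have h1w_re : (1/2 : ℝ) ≤ (1 + w).re := by
      have := Complex.abs_re_le_norm w
      have h2 : (1 + w).re = 1 + w.re := by simp
      rw [h2]
      cases' abs_le.mp this with hl _
      nlinarith [abs_le.mp (this.trans hw12)]
    have h1w0 : (1 : ℂ) + w ≠ 0 := by
      intro hc
      rw [hc] at h1w_re; simp at h1w_re; linarith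
    have h1w_abs : (1/2 : ℝ) ≤ ‖1 + w‖ := h1w_re.trans (Complex.re_le_norm _)
    have harg_half : |Complex.arg (1 + w)| ≤ Real.pi / 2 :=
      Complex.abs_arg_le_pi_div_two_iff.mpr (by linarith)
    have hsin_le : |Real.sin (Complex.arg (1 + w))| ≤ 2 * ‖w‖ := by
      rw [Complex.sin_arg]
      have h2 : (1 + w).im = w.im := by simp
      rw [h2, abs_div, abs_of_pos (lt_of_lt_of_le one_half_pos h1w_abs),
        div_le_iff₀ (lt_of_lt_of_le one_half_pos h1w_abs)]
      nlinarith [Complex.abs_im_le_norm w, norm_nonneg w]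
    have hjordan := Real.mul_abs_le_abs_sin harg_half
    have harg_w : |Complex.arg (1 + w)| ≤ Real.pi * ‖w‖ := by
      have hpi := Real.pi_pos
      rw [div_mul_eq_mul_div, div_le_iff₀ hpi] at hjordan
      nlinarith [abs_nonneg (Real.sin (Complex.arg (1 + w)))]
    have hargE : Complex.arg E = θ := by
      have hEe : E = Complex.exp ((θ : ℂ) * Complex.I) := by rw [hE_def, mul_comm]
      rw [hEe, Complex.arg_exp_mul_I, toIocMod_eq_self]
      have hpi := Real.pi_gt_three
      cases' abs_le.mp hθ with h1 h2
      constructor <;> [linarith; linarith]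
    have hargmul : Complex.arg (E * (1 + w)) = θ + Complex.arg (1 + w) := by
      have hmem : Complex.arg E + Complex.arg (1 + w) ∈ Set.Ioc (-Real.pi) Real.pi := by
        rw [hargE]
        have hpi := Real.pi_gt_three
        cases' abs_le.mp hθ with h1 h2
        cases' abs_le.mp harg_half with h3 h4
        constructor <;> [linarith; linarith]
      rw [(Complex.arg_mul_eq_add_arg_iff hE0 h1w0).mpr hmem, hargE]
    rw [hskew, hratio, hargmul]
    have hT : |θ - h * a⁻¹| ≤ 2 * |h| * (n ^ 2)⁻¹ := by
      have heq : θ - h * a⁻¹ = h * (a - n) / (n * a) := by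
        rw [hθ_def]; field_simp
      have hT' : |θ - h * a⁻¹| * (n * a) ≤ |h| := by
        rw [heq, abs_div, abs_of_pos (mul_pos hn0 ha0),
          div_mul_cancel₀ _ (mul_pos hn0 ha0).ne', abs_mul]
        nlinarith [abs_nonneg (a - n)]
      rw [mul_comm (2 * |h|) _, ← div_eq_inv_mul, le_div_iff₀ (pow_pos hn0 2)]
      nlinarith [abs_nonneg (θ - h * a⁻¹), hT', ha, hn0,
        mul_nonneg (mul_nonneg (abs_nonneg (θ - h * a⁻¹)) hn0.le)
          (by linarith : (0:ℝ) ≤ a - n / 2)]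
    have hA : |Complex.arg (1 + w)| ≤ 16 * |h| * (n ^ 2)⁻¹ := by
      rw [mul_comm (16 * |h|) _, ← div_eq_inv_mul, le_div_iff₀ (pow_pos hn0 2)]
      calc |Complex.arg (1 + w)| * n ^ 2 ≤ (Real.pi * ‖w‖) * n ^ 2 :=
            mul_le_mul_of_nonneg_right harg_w (pow_nonneg hn0.le 2)
        _ = Real.pi * (‖w‖ * n ^ 2) := by ring
        _ ≤ 4 * (4 * |h|) := by
            nlinarith [Real.pi_lt_four, Real.pi_pos, norm_nonneg w,
              mul_nonneg (norm_nonneg w) (sq_nonneg n)]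
        _ = 16 * |h| := by ring
    calc |θ + Complex.arg (1 + w) - h * a⁻¹|
        = |Complex.arg (1 + w) + (θ - h * a⁻¹)| := by ring_nf
      _ ≤ |Complex.arg (1 + w)| + |θ - h * a⁻¹| := abs_add_le _ _
      _ ≤ 16 * |h| * (n ^ 2)⁻¹ + 2 * |h| * (n ^ 2)⁻¹ := add_le_add hA hT
      _ = 18 * |h| * (n ^ 2)⁻¹ := by ring
  · -- radial part
    rw [hskew]
    set b : ℝ := ‖z * E - 1‖ with hb_def
    have hzE : z * E - 1 = E * (z - F) := by
      rw [mul_sub, hEF]; ring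
    have hb_eq : b = ‖z - F‖ := by
      rw [hb_def, hzE, norm_mul, habsE, one_mul]
    have hb : n / 2 ≤ b := by
      have h1 : n ≤ b + 1 := by
        calc n = ‖(z - F) + F‖ := by rw [hn_def]; ring_nf
          _ ≤ ‖z - F‖ + ‖F‖ := norm_add_le _ _
          _ = b + 1 := by rw [← hb_eq, habsF]
      linarith
    have hb0 : (0:ℝ) < b := by linarith
    have h_ab : |a - b| ≤ 2 * |θ| := by
      have h1 := abs_norm_sub_norm_le (z - 1) (z - F)
      have h2 : (z - 1) - (z - F) = F - 1 := by ring
      rw [h2] at h1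
      calc |a - b| = |‖z - 1‖ - ‖z - F‖| := by
            rw [ha_def, hb_eq]
        _ ≤ ‖F - 1‖ := h1
        _ ≤ 2 * |θ| := by exact hF1
    have h_ab' : |a - b| * n ≤ 2 * |h| := by
      calc |a - b| * n ≤ (2 * |θ|) * n := mul_le_mul_of_nonneg_right h_ab hn0.le
        _ = 2 * |h| := by rw [hθn]; field_simp
    have heq : b⁻¹ - a⁻¹ = (a - b) / (a * b) := by
      field_simp
    rw [heq, abs_div, abs_of_pos (mul_pos ha0 hb0)]
    rw [div_le_iff₀ (mul_pos ha0 hb0), mul_comm (8 * |h|) _, ← div_eq_inv_mul,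
      div_mul_eq_mul_div, le_div_iff₀ (pow_pos hn0 3)]
    -- |a - b| * (n^3) ≤ 8|h| * (a*b)
    have hab4 : n ^ 2 / 4 ≤ a * b := by nlinarith [hn0, ha, hb]
    have k1 : |a - b| * n ^ 3 ≤ 2 * |h| * n ^ 2 := by
      nlinarith [mul_le_mul_of_nonneg_right h_ab' (sq_nonneg n)]
    nlinarith [k1, hab4, hh, mul_nonneg hh (by linarith : (0:ℝ) ≤ a * b - n ^ 2 / 4)]

/-- The skew rotation `R_h` with center `0` is a perturbed skew rotation in the
inverse polar coordinates centered at `1`: the angular increment is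
`h/|z − 1| + O(|z|⁻²)` and the radial increment is `O(|z|⁻³)`. -/
theorem skewRot_is_perturbed_in_shifted_coords (h : ℝ) :
    ((fun z : ℂ =>
        Complex.arg ((skewRot 0 h z - 1) / (z - 1)) - h * ‖z - 1‖⁻¹)
      =O[Bornology.cobounded ℂ] fun z : ℂ => (‖z‖ ^ 2)⁻¹) ∧
    ((fun z : ℂ => ‖skewRot 0 h z - 1‖⁻¹ - ‖z - 1‖⁻¹)
      =O[Bornology.cobounded ℂ] fun z : ℂ => (‖z‖ ^ 3)⁻¹) := by
  constructor
  · rw [isBigO_iff]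
    refine ⟨18 * |h|, ?_⟩
    filter_upwards [eventually_cobounded_le_norm (2 * |h| + 2)] with z hz
    have hz' : 2 * |h| + 2 ≤ ‖z‖ := by exact hz
    have := (skewRot_aux h z hz').1
    calc ‖Complex.arg ((skewRot 0 h z - 1) / (z - 1)) - h * (‖z - 1‖)⁻¹‖
        = |Complex.arg ((skewRot 0 h z - 1) / (z - 1)) - h * (‖z - 1‖)⁻¹| := rfl
      _ ≤ 18 * |h| * ((‖z‖) ^ 2)⁻¹ := this
      _ = 18 * |h| * ‖((‖z‖) ^ 2)⁻¹‖ := by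
          rw [Real.norm_eq_abs, abs_of_nonneg (inv_nonneg.mpr (pow_nonneg (norm_nonneg z) _))]
  · rw [isBigO_iff]
    refine ⟨8 * |h|, ?_⟩
    filter_upwards [eventually_cobounded_le_norm (2 * |h| + 2)] with z hz
    have hz' : 2 * |h| + 2 ≤ ‖z‖ := by exact hz
    have := (skewRot_aux h z hz').2
    calc ‖(‖skewRot 0 h z - 1‖)⁻¹ - (‖z - 1‖)⁻¹‖
        = |(‖skewRot 0 h z - 1‖)⁻¹ - (‖z - 1‖)⁻¹| := rfl
      _ ≤ 8 * |h| * ((‖z‖) ^ 3)⁻¹ := this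
      _ = 8 * |h| * ‖((‖z‖) ^ 3)⁻¹‖ := by
          rw [Real.norm_eq_abs, abs_of_nonneg (inv_nonneg.mpr (pow_nonneg (norm_nonneg z) _))]
end

section
/- Let T_1, T_2 : ℝ × ℝ → ℝ × ℝ be 2π-equivariant maps that are perturbed skew rotations in the coordinates (r, φ) with angular coefficients h_1 and h_2 respectively. Then the composition T = T_2 ∘ T_1 is a perturbed skew rotation in the coordinates (r, φ) with angular coefficient h_1 + h_2: there exist C' > 0 and ε' > 0 such that, writing T(r, φ) = (R(r,φ), Φ(r,φ)), for all 0 < r < ε' and all φ ∈ ℝ one has |Φ(r,φ) − φ − (h_1 + h_2)·r| ≤ C'·r² and |R(r,φ) − r| ≤ C'·r³. -/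
/-- A map `T(r, φ) = (R(r,φ), Φ(r,φ))` is 2π-equivariant if `R(r, φ + 2π) = R(r, φ)`
and `Φ(r, φ + 2π) = Φ(r, φ) + 2π`. -/
def TwoPiEquivariant (T : ℝ × ℝ → ℝ × ℝ) : Prop :=
  ∀ r φ : ℝ, T (r, φ + 2 * Real.pi) = ((T (r, φ)).1, (T (r, φ)).2 + 2 * Real.pi)

/-- A 2π-equivariant map `T(r,φ) = (R(r,φ), Φ(r,φ))` is a perturbed skew rotation in
the coordinates `(r, φ)` with angular coefficient `h` if there are `C > 0` and `ε > 0`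
such that `|Φ(r,φ) − φ − h·r| ≤ C·r²` and `|R(r,φ) − r| ≤ C·r³` for all `0 < r < ε`. -/
def IsPerturbedSkewRotation (T : ℝ × ℝ → ℝ × ℝ) (h : ℝ) : Prop :=
  ∃ C > (0 : ℝ), ∃ ε > (0 : ℝ), ∀ r φ : ℝ, 0 < r → r < ε →
    |(T (r, φ)).2 - φ - h * r| ≤ C * r ^ 2 ∧ |(T (r, φ)).1 - r| ≤ C * r ^ 3

set_option maxHeartbeats 1600000 in
/-- The composition of two 2π-equivariant perturbed skew rotations with angular
coefficients `h₁` and `h₂` is a perturbed skew rotation with coefficient `h₁ + h₂`. -/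
theorem comp_perturbedSkewRotation (T₁ T₂ : ℝ × ℝ → ℝ × ℝ) (h₁ h₂ : ℝ)
    (he₁ : TwoPiEquivariant T₁) (he₂ : TwoPiEquivariant T₂)
    (hp₁ : IsPerturbedSkewRotation T₁ h₁) (hp₂ : IsPerturbedSkewRotation T₂ h₂) :
    ∃ C' > (0 : ℝ), ∃ ε' > (0 : ℝ), ∀ r φ : ℝ, 0 < r → r < ε' →
      |((T₂ ∘ T₁) (r, φ)).2 - φ - (h₁ + h₂) * r| ≤ C' * r ^ 2 ∧
      |((T₂ ∘ T₁) (r, φ)).1 - r| ≤ C' * r ^ 3 := by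
  obtain ⟨C₁, hC₁, ε₁, hε₁, H₁⟩ := hp₁
  obtain ⟨C₂, hC₂, ε₂, hε₂, H₂⟩ := hp₂
  refine ⟨9 * C₂ + (2 + |h₂|) * C₁ + 1, by positivity,
    min ε₁ (min (ε₂ / 2) (1 / (1 + C₁))), by positivity, ?_⟩
  intro r φ hr0 hrε
  have hr1 : r < ε₁ := lt_of_lt_of_le hrε (min_le_left _ _)
  have hr2 : r < ε₂ / 2 := lt_of_lt_of_le hrε ((min_le_right _ _).trans (min_le_left _ _))
  have hr3 : r < 1 / (1 + C₁) := lt_of_lt_of_le hrε ((min_le_right _ _).trans (min_le_right _ _))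
  have hC1pos : (0:ℝ) < 1 + C₁ := by linarith
  have hr4 : r * (1 + C₁) < 1 := by
    rw [lt_div_iff₀ hC1pos] at hr3; linarith
  have hrlt1 : r < 1 := by nlinarith
  have hCr : C₁ * r < 1 := by nlinarith
  obtain ⟨ha1, hb1⟩ := H₁ r φ hr0 hr1
  set p := T₁ (r, φ) with hp
  have hb1' := abs_le.mp hb1
  have ha1' := abs_le.mp ha1
  have hsmall : C₁ * r ^ 3 < r := by nlinarith
  have hp1pos : 0 < p.1 := by nlinarith [hb1'.1]
  have hp1lt : p.1 < 2 * r := by nlinarith [hb1'.2]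
  have hp1ε : p.1 < ε₂ := by linarith
  obtain ⟨ha2, hb2⟩ := H₂ p.1 p.2 hp1pos hp1ε
  have ha2' := abs_le.mp ha2
  have hb2' := abs_le.mp hb2
  have hsq : C₂ * p.1 ^ 2 ≤ 4 * C₂ * r ^ 2 := by
    have := mul_le_mul_of_nonneg_left (pow_le_pow_left₀ hp1pos.le hp1lt.le 2) hC₂.le
    nlinarith [this]
  have hcu : C₂ * p.1 ^ 3 ≤ 8 * C₂ * r ^ 3 := by
    have := mul_le_mul_of_nonneg_left (pow_le_pow_left₀ hp1pos.le hp1lt.le 3) hC₂.le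
    nlinarith [this]
  have hcube_le : r ^ 3 ≤ r ^ 2 := by nlinarith
  have hC1r : C₁ * r ^ 3 ≤ C₁ * r ^ 2 := by nlinarith
  have hprod : |h₂ * (p.1 - r)| ≤ |h₂| * (C₁ * r ^ 3) := by
    rw [abs_mul]
    exact mul_le_mul_of_nonneg_left hb1 (abs_nonneg _)
  have hprod' := abs_le.mp hprod
  have hprod2 : |h₂| * (C₁ * r ^ 3) ≤ |h₂| * (C₁ * r ^ 2) := by
    have := abs_nonneg h₂
    nlinarith
  have hgoal : (T₂ ∘ T₁) (r, φ) = T₂ (p.1, p.2) := rfl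
  rw [hgoal]
  constructor
  · rw [abs_le]
    constructor
    · linarith [ha2'.1, ha1'.1, hprod'.1, hsq, hprod2, sq_nonneg r, mul_nonneg hC₂.le (sq_nonneg r), mul_nonneg hC₁.le (sq_nonneg r)]
    · linarith [ha2'.2, ha1'.2, hprod'.2, hsq, hprod2, sq_nonneg r, mul_nonneg hC₂.le (sq_nonneg r), mul_nonneg hC₁.le (sq_nonneg r)]
  · rw [abs_le]
    constructor
    · linarith [hb2'.1, hb1'.1, hcu, hC1r, mul_nonneg (abs_nonneg h₂) (mul_nonneg hC₁.le (pow_pos hr0 3).le), pow_pos hr0 3]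
    · linarith [hb2'.2, hb1'.2, hcu, hC1r, mul_nonneg (abs_nonneg h₂) (mul_nonneg hC₁.le (pow_pos hr0 3).le), pow_pos hr0 3]
end

section
/- Let ρ, θ : U → ℝ be a concordant coordinate change from the coordinates (r, φ), defined on an open set U ⊆ ℝ² containing {0} × ℝ. Let T be a 2π-equivariant map that is a perturbed skew rotation in the coordinates (r, φ) with angular coefficient h. Then T is also a perturbed skew rotation with the same coefficient h in the coordinates (ρ, θ): there exist C' > 0 and ε' > 0 such that, writing (r_1, φ_1) = T(r, φ), for all 0 < r < ε' and all φ ∈ ℝ one has |ρ(r_1, φ_1) − ρ(r, φ)| ≤ C'·ρ(r, φ)³ and |θ(r_1, φ_1) − θ(r, φ) − h·ρ(r, φ)| ≤ C'·ρ(r, φ)². -/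
open scoped Real

namespace PSRaux

variable {E F : Type*} [NormedAddCommGroup E] [NormedSpace ℝ E]
  [NormedAddCommGroup F] [NormedSpace ℝ F]

lemma seg_norm {x y z : E} (hz : z ∈ segment ℝ x y) : ‖z - x‖ ≤ ‖y - x‖ := by
  rw [segment_eq_image'] at hz
  obtain ⟨t, ht, rfl⟩ := hz
  rw [add_sub_cancel_left, norm_smul]
  calc ‖t‖ * ‖y - x‖ ≤ 1 * ‖y - x‖ := by
        apply mul_le_mul_of_nonneg_right _ (norm_nonneg _)
        rw [Real.norm_eq_abs, abs_le]; constructor <;> linarith [ht.1, ht.2]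
    _ = ‖y - x‖ := one_mul _

lemma lip {K : Set E} (hK : Convex ℝ K) {f : E → F} {f' : E → E →L[ℝ] F}
    (hd : ∀ z ∈ K, HasFDerivAt f (f' z) z) {M : ℝ} (hb : ∀ z ∈ K, ‖f' z‖ ≤ M)
    {x y : E} (hx : x ∈ K) (hy : y ∈ K) : ‖f y - f x‖ ≤ M * ‖y - x‖ :=
  hK.norm_image_sub_le_of_norm_hasFDerivWithin_le
    (fun z hz => (hd z hz).hasFDerivWithinAt) hb hx hy

lemma quad {K : Set E} (hK : Convex ℝ K) {f : E → F} {f' : E → E →L[ℝ] F}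
    (hd : ∀ z ∈ K, HasFDerivAt f (f' z) z) {M : ℝ} (hM : 0 ≤ M)
    (hlip : ∀ z ∈ K, ∀ w ∈ K, ‖f' z - f' w‖ ≤ M * ‖z - w‖)
    {x y : E} (hx : x ∈ K) (hy : y ∈ K) :
    ‖f y - f x - f' x (y - x)‖ ≤ M * ‖y - x‖ ^ 2 := by
  have hseg : segment ℝ x y ⊆ K := hK.segment_subset hx hy
  have H := (convex_segment x y).norm_image_sub_le_of_norm_hasFDerivWithin_le'
    (f := f) (f' := f') (φ := f' x) (C := M * ‖y - x‖)
    (fun z hz => (hd z (hseg hz)).hasFDerivWithinAt)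
    (fun z hz => by
      calc ‖f' z - f' x‖ ≤ M * ‖z - x‖ := hlip z (hseg hz) x hx
        _ ≤ M * ‖y - x‖ := mul_le_mul_of_nonneg_left (seg_norm hz) hM)
    (left_mem_segment ℝ x y) (right_mem_segment ℝ x y)
  calc ‖f y - f x - f' x (y - x)‖ ≤ M * ‖y - x‖ * ‖y - x‖ := H
    _ = M * ‖y - x‖ ^ 2 := by ring

lemma oned {K : Set (ℝ × ℝ)} (hK : Convex ℝ K) {g : ℝ × ℝ → ℝ}
    {g' : ℝ × ℝ → ℝ × ℝ →L[ℝ] ℝ}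
    (hd : ∀ z ∈ K, HasFDerivAt g (g' z) z) {x y : ℝ × ℝ} (hx : x ∈ K) (hy : y ∈ K)
    (hxy : y.1 = x.1) {B : ℝ}
    (hb : ∀ z ∈ segment ℝ x y, |g' z (0, 1)| ≤ B) :
    |g y - g x| ≤ B * |y.2 - x.2| := by
  have hB : 0 ≤ B := le_trans (abs_nonneg _) (hb x (left_mem_segment ℝ x y))
  set d : ℝ := y.2 - x.2 with hd'
  have hyx : y - x = d • ((0:ℝ), (1:ℝ)) := by
    ext
    · simp [hxy]
    · simp [hd']
  set c : ℝ → ℝ × ℝ := fun t => x + t • (y - x) with hc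
  have hcd : ∀ t : ℝ, HasDerivAt c (y - x) t := fun t => by
    simpa [hc] using ((hasDerivAt_id t).smul_const (y - x)).const_add x
  have hmem : ∀ t ∈ Set.Icc (0:ℝ) 1, c t ∈ segment ℝ x y := fun t ht => by
    rw [segment_eq_image']; exact ⟨t, ht, rfl⟩
  have hder : ∀ t ∈ Set.Icc (0:ℝ) 1,
      HasDerivWithinAt (g ∘ c) (g' (c t) (y - x)) (Set.Icc 0 1) t := fun t ht =>
    (((hd (c t) (hK.segment_subset hx hy (hmem t ht))).comp_hasDerivAt t
      (hcd t)).hasDerivWithinAt)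
  have hbound : ∀ t ∈ Set.Icc (0:ℝ) 1, ‖g' (c t) (y - x)‖ ≤ B * |d| := fun t ht => by
    rw [hyx, map_smul]
    rw [norm_smul, Real.norm_eq_abs, Real.norm_eq_abs, mul_comm]
    exact mul_le_mul_of_nonneg_right (hb (c t) (hmem t ht)) (abs_nonneg _)
  have H := (convex_Icc (0:ℝ) 1).norm_image_sub_le_of_norm_hasDerivWithin_le
    hder hbound (Set.left_mem_Icc.2 zero_le_one) (Set.right_mem_Icc.2 zero_le_one)
  have hc1 : c 1 = y := by simp [hc]
  have hc0 : c 0 = x := by simp [hc]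
  simpa [Function.comp, hc1, hc0, Real.norm_eq_abs] using H

lemma per_int {f : ℝ × ℝ → ℝ} {c : ℝ}
    (hf : ∀ r φ : ℝ, f (r, φ + 2 * π) = f (r, φ) + c) :
    ∀ (k : ℤ) (r φ : ℝ), f (r, φ + 2 * π * k) = f (r, φ) + k * c := by
  intro k
  induction k using Int.induction_on with
  | zero => intro r φ; simp
  | succ n ih =>
    intro r φ
    have h1 := ih r φ
    have h2 := hf r (φ + 2 * π * (n : ℝ))
    have h3 : φ + 2 * π * ((n : ℤ) + 1 : ℤ) = φ + 2 * π * (n : ℝ) + 2 * π := by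
      push_cast; ring
    push_cast
    push_cast at h1
    calc f (r, φ + 2 * π * ((n : ℝ) + 1))
        = f (r, φ + 2 * π * (n : ℝ) + 2 * π) := by ring_nf
      _ = f (r, φ + 2 * π * (n : ℝ)) + c := h2
      _ = f (r, φ) + ((n : ℝ) + 1) * c := by rw [h1]; ring
  | pred n ih =>
    intro r φ
    have h1 := ih r φ
    push_cast at h1
    have h2 := hf r (φ + 2 * π * (-(n : ℝ) - 1))
    have h3 : φ + 2 * π * (-(n : ℝ) - 1) + 2 * π = φ + 2 * π * (-(n : ℝ)) := by ring
    rw [h3] at h2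
    push_cast
    have h4 : f (r, φ + 2 * π * (-(n : ℝ))) = f (r, φ) + (-(n : ℝ)) * c := by
      convert h1 using 3 <;> ring
    calc f (r, φ + 2 * π * (-(n : ℝ) - 1))
        = f (r, φ + 2 * π * (-(n : ℝ))) - c := by rw [h2]; ring
      _ = f (r, φ) + (-(n : ℝ) - 1) * c := by rw [h4]; ring

end PSRaux

open PSRaux

set_option maxHeartbeats 2000000

/-- A perturbed skew rotation in the coordinates `(r, φ)` with angular coefficient `h`
is also a perturbed skew rotation, with the same coefficient `h`, in any coordinates
`(ρ, θ)` concordant with `(r, φ)`. -/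
theorem perturbedSkewRotation_concordant_coords
    (U : Set (ℝ × ℝ)) (hUopen : IsOpen U) (hU : ∀ φ : ℝ, ((0 : ℝ), φ) ∈ U)
    (ρ θ : ℝ × ℝ → ℝ)
    (hρa : AnalyticOnNhd ℝ ρ U) (hθa : AnalyticOnNhd ℝ θ U)
    (hρper : ∀ r φ : ℝ, ρ (r, φ + 2 * Real.pi) = ρ (r, φ))
    (hθper : ∀ r φ : ℝ, θ (r, φ + 2 * Real.pi) = θ (r, φ) + 2 * Real.pi)
    (hρ0 : ∀ φ : ℝ, ρ (0, φ) = 0)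
    (hρr : ∀ φ : ℝ, fderiv ℝ ρ (0, φ) (1, 0) = 1)
    (hθφ : ∀ φ : ℝ, fderiv ℝ θ (0, φ) (0, 1) = 1)
    (T : ℝ × ℝ → ℝ × ℝ) (h : ℝ)
    (hTe : TwoPiEquivariant T) (hT : IsPerturbedSkewRotation T h) :
    ∃ C' > (0 : ℝ), ∃ ε' > (0 : ℝ), ∀ r φ : ℝ, 0 < r → r < ε' →
      |ρ (T (r, φ)) - ρ (r, φ)| ≤ C' * ρ (r, φ) ^ 3 ∧
      |θ (T (r, φ)) - θ (r, φ) - h * ρ (r, φ)| ≤ C' * ρ (r, φ) ^ 2 := by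
  classical
  obtain ⟨C, hC, ε, hε, hTb⟩ := hT
  have hπ := Real.pi_pos
  -- the compact strip
  set J : Set ℝ := Set.Icc (-1 : ℝ) (2 * π + 1) with hJ
  have hcomp : IsCompact ((({(0:ℝ)} : Set ℝ)) ×ˢ J) := isCompact_singleton.prod isCompact_Icc
  have hsub : (({(0:ℝ)} : Set ℝ) ×ˢ J) ⊆ U := by
    rintro ⟨a, b⟩ ⟨ha, _⟩
    rcases Set.mem_singleton_iff.1 ha with rfl
    exact hU b
  obtain ⟨δ, hδ, hδsub⟩ := hcomp.exists_thickening_subset_open hUopen hsub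
  set K : Set (ℝ × ℝ) := Set.Icc (-(δ/2)) (δ/2) ×ˢ J with hKdef
  have hKU : K ⊆ U := by
    rintro ⟨a, b⟩ ⟨ha, hb⟩
    apply hδsub
    rw [Metric.mem_thickening_iff]
    refine ⟨(0, b), Set.mk_mem_prod rfl hb, ?_⟩
    rw [Prod.dist_eq]
    simp only [dist_self, Real.dist_eq, sub_zero]
    have h1 : |a| ≤ δ / 2 := abs_le.2 ⟨by linarith [ha.1], ha.2⟩
    calc max |a| (0:ℝ) ≤ δ/2 := max_le h1 (by linarith)
      _ < δ := by linarith
  have hKconv : Convex ℝ K := (convex_Icc _ _).prod (convex_Icc _ _)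
  have hKcomp : IsCompact K := isCompact_Icc.prod isCompact_Icc
  have memK : ∀ a b : ℝ, |a| ≤ δ/2 → -1 ≤ b → b ≤ 2*π+1 → (a, b) ∈ K := by
    intro a b ha hb1 hb2
    have := abs_le.1 ha
    exact Set.mk_mem_prod ⟨this.1, this.2⟩ ⟨hb1, hb2⟩
  have h00K : ((0:ℝ), (0:ℝ)) ∈ K := memK 0 0 (by norm_num; linarith) (by linarith) (by linarith)
  -- smoothness
  have hρcd : ContDiffOn ℝ 4 ρ U := hρa.contDiffOn hUopen.uniqueDiffOn
  have hθcd : ContDiffOn ℝ 2 θ U := hθa.contDiffOn hUopen.uniqueDiffOn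
  set F : (ℝ × ℝ) → (ℝ × ℝ) →L[ℝ] ℝ := fderiv ℝ ρ with hFdef
  set F' : (ℝ × ℝ) → (ℝ × ℝ) →L[ℝ] ((ℝ × ℝ) →L[ℝ] ℝ) := fderiv ℝ F with hF'def
  set G : (ℝ × ℝ) → (ℝ × ℝ) →L[ℝ] ℝ := fderiv ℝ θ with hGdef
  have hFcd : ContDiffOn ℝ 3 F U := hρcd.fderiv_of_isOpen hUopen (by norm_num)
  have hF'cd : ContDiffOn ℝ 2 F' U := hFcd.fderiv_of_isOpen hUopen (by norm_num)
  have hGcd : ContDiffOn ℝ 1 G U := hθcd.fderiv_of_isOpen hUopen (by norm_num)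
  have hρd : ∀ x ∈ U, HasFDerivAt ρ (F x) x := fun x hx =>
    ((hρcd.differentiableOn (by norm_num)).differentiableAt (hUopen.mem_nhds hx)).hasFDerivAt
  have hθd : ∀ x ∈ U, HasFDerivAt θ (G x) x := fun x hx =>
    ((hθcd.differentiableOn (by norm_num)).differentiableAt (hUopen.mem_nhds hx)).hasFDerivAt
  have hFd : ∀ x ∈ U, HasFDerivAt F (F' x) x := fun x hx =>
    ((hFcd.differentiableOn (by norm_num)).differentiableAt (hUopen.mem_nhds hx)).hasFDerivAt
  have hF'd : ∀ x ∈ U, HasFDerivAt F' (fderiv ℝ F' x) x := fun x hx =>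
    ((hF'cd.differentiableOn (by norm_num)).differentiableAt (hUopen.mem_nhds hx)).hasFDerivAt
  have hGd : ∀ x ∈ U, HasFDerivAt G (fderiv ℝ G x) x := fun x hx =>
    ((hGcd.differentiableOn (by norm_num)).differentiableAt (hUopen.mem_nhds hx)).hasFDerivAt
  -- bounds on compact K
  obtain ⟨B0ρ, hB0ρ⟩ := hKcomp.exists_bound_of_continuousOn (hFcd.continuousOn.mono hKU)
  obtain ⟨B2ρ, hB2ρ⟩ := hKcomp.exists_bound_of_continuousOn (f := F') (hF'cd.continuousOn.mono hKU)
  obtain ⟨B3ρ, hB3ρ⟩ := hKcomp.exists_bound_of_continuousOn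
    ((hF'cd.continuousOn_fderiv_of_isOpen hUopen (by norm_num)).mono hKU)
  obtain ⟨B0θ, hB0θ⟩ := hKcomp.exists_bound_of_continuousOn (hGcd.continuousOn.mono hKU)
  obtain ⟨B2θ, hB2θ⟩ := hKcomp.exists_bound_of_continuousOn
    (((hθcd.fderiv_of_isOpen (m := 1) hUopen (by norm_num)).continuousOn_fderiv_of_isOpen
      hUopen le_rfl).mono hKU)
  have hB0ρ0 : 0 ≤ B0ρ := le_trans (norm_nonneg _) (hB0ρ _ h00K)
  have hB2ρ0 : 0 ≤ B2ρ := le_trans (norm_nonneg _) (hB2ρ _ h00K)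
  have hB3ρ0 : 0 ≤ B3ρ := le_trans (norm_nonneg _) (hB3ρ _ h00K)
  have hB0θ0 : 0 ≤ B0θ := le_trans (norm_nonneg _) (hB0θ _ h00K)
  have hB2θ0 : 0 ≤ B2θ := le_trans (norm_nonneg _) (hB2θ _ h00K)
  -- pointwise facts on the axis
  have hcurve : ∀ ψ : ℝ, HasDerivAt (fun s : ℝ => ((0:ℝ), s)) ((0:ℝ), (1:ℝ)) ψ :=
    fun ψ => (hasDerivAt_const ψ (0:ℝ)).prodMk (hasDerivAt_id ψ)
  have fact_r1 : ∀ ψ : ℝ, F (0, ψ) (0, 1) = 0 := by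
    intro ψ
    have h1 : HasDerivAt (fun s : ℝ => ρ (0, s)) (F (0, ψ) (0, 1)) ψ := by
      have := (hρd (0, ψ) (hU ψ)).comp_hasDerivAt ψ (hcurve ψ)
      simpa [Function.comp_def] using this
    have h2 : HasDerivAt (fun s : ℝ => ρ (0, s)) 0 ψ := by
      have he : (fun s : ℝ => ρ (0, s)) = fun _ => (0:ℝ) := funext hρ0
      rw [he]; exact hasDerivAt_const ψ 0
    exact h1.unique h2
  have fact_symm : ∀ ψ : ℝ, F' (0, ψ) (1, 0) (0, 1) = F' (0, ψ) (0, 1) (1, 0) := by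
    intro ψ
    have hev : ∀ᶠ y in nhds ((0:ℝ), ψ), HasFDerivAt ρ (F y) y :=
      Filter.eventually_of_mem (hUopen.mem_nhds (hU ψ)) (fun y hy => hρd y hy)
    exact second_derivative_symmetric_of_eventually hev (hFd (0, ψ) (hU ψ)) _ _
  have fact_r2 : ∀ ψ : ℝ, F' (0, ψ) (0, 1) (1, 0) = 0 := by
    intro ψ
    have hevl : HasFDerivAt (fun v : ℝ × ℝ => F v (1, 0))
        ((ContinuousLinearMap.apply ℝ ℝ ((1:ℝ), (0:ℝ))).comp (F' (0, ψ))) (0, ψ) :=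
      (ContinuousLinearMap.apply ℝ ℝ ((1:ℝ), (0:ℝ))).hasFDerivAt.comp _ (hFd (0, ψ) (hU ψ))
    have h1 : HasDerivAt (fun s : ℝ => F (0, s) (1, 0)) (F' (0, ψ) (0, 1) (1, 0)) ψ := by
      have := hevl.comp_hasDerivAt ψ (hcurve ψ)
      simpa [Function.comp_def] using this
    have h2 : HasDerivAt (fun s : ℝ => F (0, s) (1, 0)) 0 ψ := by
      have he : (fun s : ℝ => F (0, s) (1, 0)) = fun _ => (1:ℝ) := funext fun s => hρr s
      rw [he]; exact hasDerivAt_const ψ 1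
    exact h1.unique h2
  -- quantitative estimates on K
  have h0K : ∀ {s ψ : ℝ}, (s, ψ) ∈ K → ((0:ℝ), ψ) ∈ K := by
    intro s ψ hsK
    exact memK 0 ψ (by rw [abs_zero]; linarith) hsK.2.1 hsK.2.2
  have hdiff : ∀ s ψ : ℝ, ((s, ψ) : ℝ × ℝ) - (0, ψ) = s • ((1:ℝ), (0:ℝ)) := by
    intro s ψ; ext <;> simp
  have hnorms : ∀ s ψ : ℝ, ‖((s, ψ) : ℝ × ℝ) - (0, ψ)‖ = |s| := by
    intro s ψ
    rw [hdiff, norm_smul]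
    simp [Prod.norm_def]
  have hn01 : ‖(((0:ℝ), (1:ℝ)) : ℝ × ℝ)‖ = 1 := by simp [Prod.norm_def]
  have est_a : ∀ s ψ : ℝ, (s, ψ) ∈ K → |ρ (s, ψ) - s| ≤ B2ρ * s ^ 2 := by
    intro s ψ hsK
    set g : ℝ × ℝ → ℝ := fun v => ρ v - v.1 with hg
    set g' : ℝ × ℝ → (ℝ × ℝ) →L[ℝ] ℝ :=
      fun z => F z - ContinuousLinearMap.fst ℝ ℝ ℝ with hg'
    have hgd : ∀ z ∈ K, HasFDerivAt g (g' z) z := fun z hz =>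
      ((hρd z (hKU hz)).sub hasFDerivAt_fst)
    have hglip : ∀ z ∈ K, ∀ w ∈ K, ‖g' z - g' w‖ ≤ B2ρ * ‖z - w‖ := by
      intro z hz w hw
      have he : g' z - g' w = F z - F w := by
        simp only [hg']; abel
      rw [he]
      exact lip hKconv (fun u hu => hFd u (hKU hu)) (fun u hu => hB2ρ u hu) hw hz
    have H := quad hKconv hgd hB2ρ0 hglip (h0K hsK) hsK
    have hval : g' (0, ψ) (((s, ψ) : ℝ × ℝ) - (0, ψ)) = 0 := by
      rw [hdiff, map_smul]
      simp [hg', hρr ψ]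
    have hgval : g (s, ψ) - g (0, ψ) = ρ (s, ψ) - s := by
      simp [hg, hρ0 ψ]
    rw [hval, sub_zero, hgval, hnorms] at H
    calc |ρ (s, ψ) - s| = ‖ρ (s, ψ) - s‖ := (Real.norm_eq_abs _).symm
      _ ≤ B2ρ * |s| ^ 2 := H
      _ = B2ρ * s ^ 2 := by rw [sq_abs]
  have est_b : ∀ s ψ : ℝ, (s, ψ) ∈ K → |F (s, ψ) (0, 1)| ≤ B3ρ * s ^ 2 := by
    intro s ψ hsK
    have hFlip : ∀ z ∈ K, ∀ w ∈ K, ‖F' z - F' w‖ ≤ B3ρ * ‖z - w‖ := fun z hz w hw =>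
      lip hKconv (fun u hu => hF'd u (hKU hu)) (fun u hu => hB3ρ u hu) hw hz
    have H := quad hKconv (fun u hu => hFd u (hKU hu)) hB3ρ0 hFlip (h0K hsK) hsK
    have h3 : ∀ u : ℝ × ℝ, u = s • ((1:ℝ), (0:ℝ)) → F' (0, ψ) u (0, 1) = 0 := by
      rintro u rfl
      rw [map_smul, ContinuousLinearMap.smul_apply, fact_symm ψ, fact_r2 ψ, smul_zero]
    have key : F (s, ψ) (0, 1)
        = (F (s, ψ) - F (0, ψ) - F' (0, ψ) (((s, ψ) : ℝ × ℝ) - (0, ψ))) (0, 1) := by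
      simp only [ContinuousLinearMap.sub_apply, fact_r1 ψ, sub_zero]
      rw [h3 _ (hdiff s ψ), sub_zero]
    rw [key]
    have hA := ContinuousLinearMap.le_opNorm
      (F (s, ψ) - F (0, ψ) - F' (0, ψ) (((s, ψ) : ℝ × ℝ) - (0, ψ))) (((0:ℝ), (1:ℝ)))
    rw [hn01, mul_one] at hA
    rw [hnorms] at H
    calc |(F (s, ψ) - F (0, ψ) - F' (0, ψ) (((s, ψ) : ℝ × ℝ) - (0, ψ))) (0, 1)|
        ≤ ‖F (s, ψ) - F (0, ψ) - F' (0, ψ) (((s, ψ) : ℝ × ℝ) - (0, ψ))‖ := hA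
      _ ≤ B3ρ * |s| ^ 2 := H
      _ = B3ρ * s ^ 2 := by rw [sq_abs]
  have est_c : ∀ s ψ : ℝ, (s, ψ) ∈ K → |G (s, ψ) (0, 1) - 1| ≤ B2θ * |s| := by
    intro s ψ hsK
    have H := lip hKconv (fun u hu => hGd u (hKU hu)) (fun u hu => hB2θ u hu)
      (h0K hsK) hsK
    rw [hnorms] at H
    have happ : G (s, ψ) (0, 1) - 1 = (G (s, ψ) - G (0, ψ)) (0, 1) := by
      simp [ContinuousLinearMap.sub_apply, hθφ ψ]
    rw [happ]
    have hA := ContinuousLinearMap.le_opNorm (G (s, ψ) - G (0, ψ)) (((0:ℝ), (1:ℝ)))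
    rw [hn01, mul_one] at hA
    exact le_trans hA H
  -- integer periodicity
  have ρper : ∀ (k : ℤ) (r φ : ℝ), ρ (r, φ + 2 * π * k) = ρ (r, φ) := by
    intro k r φ
    have := per_int (f := ρ) (c := 0) (fun r φ => by rw [hρper r φ, add_zero]) k r φ
    simpa using this
  have θperZ : ∀ (k : ℤ) (r φ : ℝ), θ (r, φ + 2 * π * k) = θ (r, φ) + k * (2 * π) := by
    intro k r φ
    have := per_int (f := θ) (c := 2 * π) (fun r φ => hθper r φ) k r φ
    linarith [this]
  have T1per : ∀ (k : ℤ) (r φ : ℝ), (T (r, φ + 2 * π * k)).1 = (T (r, φ)).1 := by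
    intro k r φ
    have := per_int (f := fun p => (T p).1) (c := 0)
      (fun r φ => by
        show (T (r, φ + 2 * π)).1 = (T (r, φ)).1 + 0
        rw [hTe r φ, add_zero]) k r φ
    simpa using this
  have T2per : ∀ (k : ℤ) (r φ : ℝ), (T (r, φ + 2 * π * k)).2 = (T (r, φ)).2 + k * (2 * π) := by
    intro k r φ
    exact per_int (f := fun p => (T p).2) (c := 2 * π)
      (fun r φ => by
        show (T (r, φ + 2 * π)).2 = (T (r, φ)).2 + 2 * π
        rw [hTe r φ]) k r φ
  -- constants
  set Q : ℝ := 1 + C + |h| + B2ρ with hQ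
  have hQ1 : 1 ≤ Q := by
    have := abs_nonneg h
    simp only [hQ]; linarith
  have hQpos : 0 < Q := by linarith
  clear_value Q
  set ε' : ℝ := min ε (min (δ/4) (1/(2*Q))) with hε'def
  have hε'pos : 0 < ε' := lt_min hε (lt_min (by linarith) (by positivity))
  have hε'1 : ε' ≤ ε := min_le_left _ _
  have hε'2 : ε' ≤ δ/4 := le_trans (min_le_right _ _) (min_le_left _ _)
  have hε'3 : ε' ≤ 1/(2*Q) := le_trans (min_le_right _ _) (min_le_right _ _)
  clear_value ε'
  set A1 : ℝ := B0ρ * C + B3ρ * (|h| + C) with hA1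
  set A2 : ℝ := B0θ * C + B2θ * (|h| + C) + C + |h| * B2ρ with hA2
  have habsh : 0 ≤ |h| := abs_nonneg h
  have hA1n : 0 ≤ A1 := by
    have h1 := mul_nonneg hB0ρ0 hC.le
    have h2 := mul_nonneg hB3ρ0 (by linarith : (0:ℝ) ≤ |h| + C)
    simp only [hA1]; linarith
  have hA2n : 0 ≤ A2 := by
    have h1 := mul_nonneg hB0θ0 hC.le
    have h2 := mul_nonneg hB2θ0 (by linarith : (0:ℝ) ≤ |h| + C)
    have h3 := mul_nonneg habsh hB2ρ0
    simp only [hA2]; linarith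
  clear_value A1 A2
  refine ⟨8 * A1 + 4 * A2 + 1, by linarith, ε', hε'pos, ?_⟩
  intro r φ hr hrε
  have hrε2 : r < ε := lt_of_lt_of_le hrε hε'1
  have hrδ : r < δ/4 := lt_of_lt_of_le hrε hε'2
  have hrQ : Q * r < 1/2 := by
    have h1 : r < 1/(2*Q) := lt_of_lt_of_le hrε hε'3
    rw [lt_div_iff₀ (by linarith)] at h1
    have h2 : 2 * (Q * r) = r * (2 * Q) := by ring
    linarith only [h1, h2]
  have hr1 : r < 1 := by
    have h2 : r ≤ Q * r := le_mul_of_one_le_left hr.le hQ1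
    linarith
  have hrr : r ^ 2 ≤ r := by
    have := mul_le_mul_of_nonneg_right hr1.le hr.le
    calc r ^ 2 = r * r := sq r
      _ ≤ 1 * r := this
      _ = r := one_mul r
  have hCr : C * r < 1/2 := by
    have h2 : C * r ≤ Q * r :=
      mul_le_mul_of_nonneg_right (by simp only [hQ]; linarith) hr.le
    linarith
  have hhr : |h| * r < 1/2 := by
    have h2 : |h| * r ≤ Q * r :=
      mul_le_mul_of_nonneg_right (by simp only [hQ]; linarith) hr.le
    linarith
  have hB2ρr : B2ρ * r < 1/2 := by
    have h2 : B2ρ * r ≤ Q * r :=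
      mul_le_mul_of_nonneg_right (by simp only [hQ]; linarith) hr.le
    linarith
  -- reduce to the fundamental domain
  set k : ℤ := ⌊φ / (2 * π)⌋ with hk
  set φ₀ : ℝ := φ - k * (2 * π) with hφ₀def
  have hφ₀0 : 0 ≤ φ₀ := Int.sub_floor_div_mul_nonneg φ (by linarith)
  have hφ₀2π : φ₀ < 2 * π := Int.sub_floor_div_mul_lt φ (by linarith)
  have hφeq : φ = φ₀ + 2 * π * k := by rw [hφ₀def]; ring
  set R : ℝ := (T (r, φ₀)).1 with hRdef
  set Φ : ℝ := (T (r, φ₀)).2 with hΦdef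
  have hT1 : (T (r, φ)).1 = R := by rw [hφeq, T1per]
  have hT2 : (T (r, φ)).2 = Φ + k * (2 * π) := by rw [hφeq, T2per]
  have hρφ : ρ (r, φ) = ρ (r, φ₀) := by rw [hφeq, ρper]
  have hθφ2 : θ (r, φ) = θ (r, φ₀) + k * (2 * π) := by rw [hφeq, θperZ]
  have hTρ : ρ (T (r, φ)) = ρ (R, Φ) := by
    calc ρ (T (r, φ)) = ρ ((T (r, φ)).1, (T (r, φ)).2) := by rw [Prod.mk.eta]
      _ = ρ (R, Φ + k * (2 * π)) := by rw [hT1, hT2]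
      _ = ρ (R, Φ + 2 * π * k) := by ring_nf
      _ = ρ (R, Φ) := ρper k R Φ
  have hTθ : θ (T (r, φ)) = θ (R, Φ) + k * (2 * π) := by
    calc θ (T (r, φ)) = θ ((T (r, φ)).1, (T (r, φ)).2) := by rw [Prod.mk.eta]
      _ = θ (R, Φ + k * (2 * π)) := by rw [hT1, hT2]
      _ = θ (R, Φ + 2 * π * k) := by ring_nf
      _ = θ (R, Φ) + k * (2 * π) := θperZ k R Φ
  obtain ⟨hEΦ, hER⟩ := hTb r φ₀ hr hrε2
  rw [← hΦdef] at hEΦ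
  rw [← hRdef] at hER
  clear_value k φ₀ R Φ
  -- basic bounds
  have habsd : |Φ - φ₀| ≤ (|h| + C) * r := by
    have h1 : |Φ - φ₀| ≤ |Φ - φ₀ - h * r| + |h * r| := by
      calc |Φ - φ₀| = |(Φ - φ₀ - h * r) + h * r| := by ring_nf
        _ ≤ |Φ - φ₀ - h * r| + |h * r| := abs_add_le _ _
    have h2 : |h * r| = |h| * r := by rw [abs_mul, abs_of_pos hr]
    have h3 : C * r ^ 2 ≤ C * r := mul_le_mul_of_nonneg_left hrr hC.le
    have h4 : (|h| + C) * r = |h| * r + C * r := by ring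
    linarith [hEΦ]
  have hERr : |R - r| ≤ C * r ^ 3 := hER
  -- memberships
  have hrK : (r, φ₀) ∈ K := by
    apply memK r φ₀ _ (by linarith) (by linarith)
    rw [abs_of_pos hr]; linarith
  have habsd1 : |Φ - φ₀| < 1 := by
    have h4 : (|h| + C) * r = |h| * r + C * r := by ring
    linarith
  have hΦmem1 : -1 ≤ Φ := by
    have := abs_le.1 habsd1.le
    linarith [this.1]
  have hΦmem2 : Φ ≤ 2 * π + 1 := by
    have := abs_le.1 habsd1.le
    linarith [this.2]
  have hrΦK : (r, Φ) ∈ K := by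
    apply memK r Φ _ hΦmem1 hΦmem2
    rw [abs_of_pos hr]; linarith
  have hRabs : |R| ≤ δ / 2 := by
    have h1 := abs_le.1 hERr
    have h2 : C * r ^ 3 ≤ r / 2 := by
      have e1 : C * r ^ 3 = (C * r) * r ^ 2 := by ring
      have e2 : (C * r) * r ^ 2 ≤ (1/2) * r ^ 2 :=
        mul_le_mul_of_nonneg_right hCr.le (sq_nonneg r)
      have e3 : (1/2) * r ^ 2 ≤ (1/2) * r := by linarith
      linarith [e1 ▸ le_trans e2 e3]
    rw [abs_le]
    constructor
    · linarith [h1.1]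
    · linarith [h1.2]
  have hRK : (R, Φ) ∈ K := memK R Φ hRabs hΦmem1 hΦmem2
  -- the four elementary bounds
  have hnormfst : ∀ a b c : ℝ, ‖((a, c) : ℝ × ℝ) - (b, c)‖ = |a - b| := by
    intro a b c
    have he : ((a, c) : ℝ × ℝ) - (b, c) = (a - b, 0) := by ext <;> simp
    rw [he, Prod.norm_def]
    show max ‖a - b‖ ‖(0 : ℝ)‖ = |a - b|
    rw [norm_zero, Real.norm_eq_abs, max_eq_left (abs_nonneg _)]
  have bound1 : |ρ (R, Φ) - ρ (r, Φ)| ≤ B0ρ * |R - r| := by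
    have H := lip hKconv (fun u hu => hρd u (hKU hu)) (fun u hu => hB0ρ u hu) hrΦK hRK
    rw [hnormfst R r Φ] at H
    simpa [Real.norm_eq_abs] using H
  have bound3 : |θ (R, Φ) - θ (r, Φ)| ≤ B0θ * |R - r| := by
    have H := lip hKconv (fun u hu => hθd u (hKU hu)) (fun u hu => hB0θ u hu) hrΦK hRK
    rw [hnormfst R r Φ] at H
    simpa [Real.norm_eq_abs] using H
  have hseg1 : ∀ z ∈ segment ℝ ((r, φ₀) : ℝ × ℝ) ((r, Φ) : ℝ × ℝ), z.1 = r := by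
    intro z hz
    rw [segment_eq_image'] at hz
    obtain ⟨t, ht, rfl⟩ := hz
    simp
  have bound2 : |ρ (r, Φ) - ρ (r, φ₀)| ≤ (B3ρ * r ^ 2) * |Φ - φ₀| := by
    have hb : ∀ z ∈ segment ℝ ((r, φ₀) : ℝ × ℝ) ((r, Φ) : ℝ × ℝ),
        |F z (0, 1)| ≤ B3ρ * r ^ 2 := by
      intro z hz
      have hzK : z ∈ K := hKconv.segment_subset hrK hrΦK hz
      have hze : ((r : ℝ), z.2) = z := by rw [← hseg1 z hz]
      rw [← hze] at hzK
      have := est_b r z.2 hzK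
      rw [hze] at this
      exact this
    have H := oned hKconv (fun u hu => hρd u (hKU hu)) hrK hrΦK rfl hb
    simpa using H
  have bound4 : |(θ (r, Φ) - Φ) - (θ (r, φ₀) - φ₀)| ≤ (B2θ * r) * |Φ - φ₀| := by
    have hg2d : ∀ z ∈ K, HasFDerivAt (fun v : ℝ × ℝ => θ v - v.2)
        (G z - ContinuousLinearMap.snd ℝ ℝ ℝ) z := fun z hz =>
      (hθd z (hKU hz)).sub hasFDerivAt_snd
    have hb : ∀ z ∈ segment ℝ ((r, φ₀) : ℝ × ℝ) ((r, Φ) : ℝ × ℝ),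
        |(G z - ContinuousLinearMap.snd ℝ ℝ ℝ) (0, 1)| ≤ B2θ * r := by
      intro z hz
      have hzK : z ∈ K := hKconv.segment_subset hrK hrΦK hz
      have hze : ((r : ℝ), z.2) = z := by rw [← hseg1 z hz]
      rw [← hze] at hzK
      have hc := est_c r z.2 hzK
      rw [abs_of_pos hr] at hc
      have he : (G z - ContinuousLinearMap.snd ℝ ℝ ℝ) (0, 1) = G z (0, 1) - 1 := by
        simp
      rw [he, ← hze]
      exact hc
    have H := oned hKconv hg2d hrK hrΦK rfl hb
    simpa using H
  -- lower bound for ρ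
  have hpra : |ρ (r, φ₀) - r| ≤ B2ρ * r ^ 2 := est_a r φ₀ hrK
  have hpra' := abs_le.1 hpra
  have hB2r2 : B2ρ * r ^ 2 ≤ r / 2 := by
    have e1 : B2ρ * r ^ 2 = (B2ρ * r) * r := by ring
    have e2 : (B2ρ * r) * r ≤ (1/2) * r := mul_le_mul_of_nonneg_right hB2ρr.le hr.le
    linarith [e1 ▸ e2]
  have hprl : r / 2 ≤ ρ (r, φ₀) := by linarith [hpra'.1]
  have hprpos : 0 < ρ (r, φ₀) := by linarith
  have hr2pr : r ≤ 2 * ρ (r, φ₀) := by linarith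
  have hrpow3 : r ^ 3 ≤ 8 * ρ (r, φ₀) ^ 3 := by
    have hp := pow_le_pow_left₀ hr.le hr2pr 3
    calc r ^ 3 ≤ (2 * ρ (r, φ₀)) ^ 3 := hp
      _ = 8 * ρ (r, φ₀) ^ 3 := by ring
  have hrpow2 : r ^ 2 ≤ 4 * ρ (r, φ₀) ^ 2 := by
    have hp := pow_le_pow_left₀ hr.le hr2pr 2
    calc r ^ 2 ≤ (2 * ρ (r, φ₀)) ^ 2 := hp
      _ = 4 * ρ (r, φ₀) ^ 2 := by ring
  have hpr3n : 0 ≤ ρ (r, φ₀) ^ 3 := by positivity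
  have hpr2n : 0 ≤ ρ (r, φ₀) ^ 2 := sq_nonneg _
  constructor
  · -- radial estimate
    rw [hTρ, hρφ]
    have t1 : |ρ (R, Φ) - ρ (r, Φ)| ≤ B0ρ * (C * r ^ 3) :=
      le_trans bound1 (mul_le_mul_of_nonneg_left hER hB0ρ0)
    have t2 : |ρ (r, Φ) - ρ (r, φ₀)| ≤ (B3ρ * r ^ 2) * ((|h| + C) * r) :=
      le_trans bound2 (mul_le_mul_of_nonneg_left habsd (mul_nonneg hB3ρ0 (sq_nonneg r)))
    have ttri : |ρ (R, Φ) - ρ (r, φ₀)| ≤ |ρ (R, Φ) - ρ (r, Φ)| + |ρ (r, Φ) - ρ (r, φ₀)| :=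
      abs_sub_le _ _ _
    have e : B0ρ * (C * r ^ 3) + (B3ρ * r ^ 2) * ((|h| + C) * r) = A1 * r ^ 3 := by
      rw [hA1]; ring
    have tsum : |ρ (R, Φ) - ρ (r, φ₀)| ≤ A1 * r ^ 3 := by linarith
    have tfin : A1 * r ^ 3 ≤ A1 * (8 * ρ (r, φ₀) ^ 3) := mul_le_mul_of_nonneg_left hrpow3 hA1n
    have tA2 : 0 ≤ (4 * A2 + 1) * ρ (r, φ₀) ^ 3 := mul_nonneg (by linarith) hpr3n
    have efin : (8 * A1 + 4 * A2 + 1) * ρ (r, φ₀) ^ 3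
        = A1 * (8 * ρ (r, φ₀) ^ 3) + (4 * A2 + 1) * ρ (r, φ₀) ^ 3 := by ring
    linarith
  · -- angular estimate
    rw [hTθ, hθφ2, hρφ]
    have eg : θ (R, Φ) + (k : ℝ) * (2 * π) - (θ (r, φ₀) + (k : ℝ) * (2 * π)) - h * ρ (r, φ₀)
        = (θ (R, Φ) - θ (r, Φ)) + ((θ (r, Φ) - Φ) - (θ (r, φ₀) - φ₀))
          + (Φ - φ₀ - h * r) + h * (r - ρ (r, φ₀)) := by ring
    rw [eg]
    have habs4 : ∀ a b c d : ℝ, |a + b + c + d| ≤ |a| + |b| + |c| + |d| := by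
      intro a b c d
      calc |a + b + c + d| ≤ |a + b + c| + |d| := abs_add_le _ _
        _ ≤ (|a + b| + |c|) + |d| := by linarith [abs_add_le (a + b) c]
        _ ≤ ((|a| + |b|) + |c|) + |d| := by linarith [abs_add_le a b]
    have u1 : |θ (R, Φ) - θ (r, Φ)| ≤ B0θ * (C * r ^ 3) :=
      le_trans bound3 (mul_le_mul_of_nonneg_left hER hB0θ0)
    have hr32 : r ^ 3 ≤ r ^ 2 := by
      calc r ^ 3 = r ^ 2 * r := by ring
        _ ≤ r ^ 2 * 1 := mul_le_mul_of_nonneg_left hr1.le (sq_nonneg r)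
        _ = r ^ 2 := mul_one _
    have u1' : B0θ * (C * r ^ 3) ≤ B0θ * C * r ^ 2 := by
      calc B0θ * (C * r ^ 3) = (B0θ * C) * r ^ 3 := by ring
        _ ≤ (B0θ * C) * r ^ 2 := mul_le_mul_of_nonneg_left hr32 (mul_nonneg hB0θ0 hC.le)
        _ = B0θ * C * r ^ 2 := by ring
    have u2 : |(θ (r, Φ) - Φ) - (θ (r, φ₀) - φ₀)| ≤ (B2θ * r) * ((|h| + C) * r) :=
      le_trans bound4 (mul_le_mul_of_nonneg_left habsd (mul_nonneg hB2θ0 hr.le))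
    have u4 : |h * (r - ρ (r, φ₀))| ≤ |h| * (B2ρ * r ^ 2) := by
      rw [abs_mul]
      apply mul_le_mul_of_nonneg_left _ habsh
      rw [abs_sub_comm]
      exact hpra
    have e2 : B0θ * C * r ^ 2 + (B2θ * r) * ((|h| + C) * r) + C * r ^ 2 + |h| * (B2ρ * r ^ 2)
        = A2 * r ^ 2 := by rw [hA2]; ring
    have usum : |(θ (R, Φ) - θ (r, Φ)) + ((θ (r, Φ) - Φ) - (θ (r, φ₀) - φ₀))
        + (Φ - φ₀ - h * r) + h * (r - ρ (r, φ₀))| ≤ A2 * r ^ 2 := by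
      have h4 := habs4 (θ (R, Φ) - θ (r, Φ)) ((θ (r, Φ) - Φ) - (θ (r, φ₀) - φ₀))
        (Φ - φ₀ - h * r) (h * (r - ρ (r, φ₀)))
      linarith [hEΦ]
    have ufin : A2 * r ^ 2 ≤ A2 * (4 * ρ (r, φ₀) ^ 2) := mul_le_mul_of_nonneg_left hrpow2 hA2n
    have tA1 : 0 ≤ (8 * A1 + 1) * ρ (r, φ₀) ^ 2 := mul_nonneg (by linarith) hpr2n
    have efin : (8 * A1 + 4 * A2 + 1) * ρ (r, φ₀) ^ 2
        = A2 * (4 * ρ (r, φ₀) ^ 2) + (8 * A1 + 1) * ρ (r, φ₀) ^ 2 := by ring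
    linarith
end

section
/- Let ρ_0, ρ_1 : ℝ → (0, ∞) be continuous 2π-periodic functions with ρ_0(θ) < ρ_1(θ) for all θ, let γ_i = {ρ_i(θ)·e^{iθ} : θ ∈ ℝ} (i = 0, 1) be the corresponding closed radial curves, and let A = {r·e^{iθ} : θ ∈ ℝ, ρ_0(θ) ≤ r ≤ ρ_1(θ)} be the closed annulus bounded by γ_0 and γ_1. Let B ⊆ ℂ be an open set with A ⊆ B and let T : B → B be a homeomorphism of B onto itself. If T(γ_0) = γ_0 and T(γ_1) = γ_1, then T(A) = A. -/
open Complex Set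

/-- The closed radial curve `{ρ(θ)·e^{iθ} : θ ∈ ℝ}` around `0` in `ℂ`. -/
noncomputable def radialCurve (ρ : ℝ → ℝ) : Set ℂ :=
  {z : ℂ | ∃ θ : ℝ, z = (ρ θ : ℂ) * Complex.exp (Complex.I * (θ : ℂ))}

/-- The closed annulus `{r·e^{iθ} : θ ∈ ℝ, ρ₀(θ) ≤ r ≤ ρ₁(θ)}` bounded by the radial
curves of `ρ₀` and `ρ₁`. -/
noncomputable def radialAnnulus (ρ₀ ρ₁ : ℝ → ℝ) : Set ℂ :=
  {z : ℂ | ∃ θ r : ℝ, ρ₀ θ ≤ r ∧ r ≤ ρ₁ θ ∧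
    z = (r : ℂ) * Complex.exp (Complex.I * (θ : ℂ))}

namespace RadialAux

lemma abs_polar {r θ : ℝ} (hr : 0 ≤ r) :
    ‖(r : ℂ) * Complex.exp (Complex.I * (θ : ℂ))‖ = r := by
  rw [norm_mul, Complex.norm_exp]
  have h0 : (Complex.I * (θ : ℂ)).re = 0 := by simp
  rw [h0, Real.exp_zero, mul_one, Complex.norm_real, Real.norm_eq_abs, _root_.abs_of_nonneg hr]

lemma polar_ne_zero {r θ : ℝ} (hr : 0 < r) :
    ((r : ℂ) * Complex.exp (Complex.I * (θ : ℂ))) ≠ 0 := by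
  intro h
  have := abs_polar (θ := θ) hr.le
  rw [h] at this
  simp at this
  linarith

lemma polar_inj {r r' θ θ' : ℝ} (hr : 0 < r) (hr' : 0 < r')
    (h : (r : ℂ) * Complex.exp (Complex.I * (θ : ℂ))
        = (r' : ℂ) * Complex.exp (Complex.I * (θ' : ℂ))) :
    r = r' ∧ ∃ n : ℤ, θ = θ' + n * (2 * Real.pi) := by
  have habs : r = r' := by
    have := congrArg (‖·‖) h
    rwa [abs_polar hr.le, abs_polar hr'.le] at this
  refine ⟨habs, ?_⟩
  subst habs
  have hr0 : (r : ℂ) ≠ 0 := by exact_mod_cast hr.ne'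
  have hexp : Complex.exp (Complex.I * (θ : ℂ)) = Complex.exp (Complex.I * (θ' : ℂ)) :=
    mul_left_cancel₀ hr0 h
  obtain ⟨n, hn⟩ := Complex.exp_eq_exp_iff_exists_int.mp hexp
  refine ⟨n, ?_⟩
  have : (θ : ℂ) = ((θ' + n * (2 * Real.pi) : ℝ) : ℂ) := by
    apply mul_left_cancel₀ Complex.I_ne_zero
    push_cast
    linear_combination hn
  exact_mod_cast this

lemma periodic_of (ρ : ℝ → ℝ) (hper : ∀ θ : ℝ, ρ (θ + 2 * Real.pi) = ρ θ) :
    Function.Periodic ρ (2 * Real.pi) := hper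

lemma rho_shift {ρ : ℝ → ℝ} (hper : ∀ θ : ℝ, ρ (θ + 2 * Real.pi) = ρ θ)
    (θ : ℝ) (n : ℤ) : ρ (θ + n * (2 * Real.pi)) = ρ θ := by
  have h := (periodic_of ρ hper).zsmul n θ
  rwa [zsmul_eq_mul] at h

lemma rho_arg_polar {ρ : ℝ → ℝ} (hper : ∀ θ : ℝ, ρ (θ + 2 * Real.pi) = ρ θ)
    {r θ : ℝ} (hr : 0 < r) :
    ρ (Complex.arg ((r : ℂ) * Complex.exp (Complex.I * (θ : ℂ)))) = ρ θ := by
  set z := (r : ℂ) * Complex.exp (Complex.I * (θ : ℂ)) with hz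
  have hz0 : z ≠ 0 := polar_ne_zero hr
  have habs : ‖z‖ = r := abs_polar hr.le
  have hzz : z = ((‖z‖ : ℝ) : ℂ) * Complex.exp (Complex.I * (Complex.arg z : ℂ)) := by
    rw [mul_comm Complex.I]
    exact (Complex.norm_mul_exp_arg_mul_I z).symm
  have habs0 : 0 < ‖z‖ := by rw [habs]; exact hr
  obtain ⟨-, n, hn⟩ := polar_inj hr habs0 hzz
  rw [hn]
  exact (rho_shift hper _ n).symm

lemma mem_curve_iff {ρ : ℝ → ℝ} (hper : ∀ θ : ℝ, ρ (θ + 2 * Real.pi) = ρ θ)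
    (hpos : ∀ θ, 0 < ρ θ) (z : ℂ) :
    z ∈ radialCurve ρ ↔ z ≠ 0 ∧ ‖z‖ = ρ (Complex.arg z) := by
  constructor
  · rintro ⟨θ, rfl⟩
    exact ⟨polar_ne_zero (hpos θ),
      by rw [abs_polar (hpos θ).le, rho_arg_polar hper (hpos θ)]⟩
  · rintro ⟨hz, habs⟩
    refine ⟨Complex.arg z, ?_⟩
    rw [← habs, mul_comm Complex.I]
    exact (Complex.norm_mul_exp_arg_mul_I z).symm

lemma mem_ann_iff {ρ₀ ρ₁ : ℝ → ℝ}
    (hper₀ : ∀ θ : ℝ, ρ₀ (θ + 2 * Real.pi) = ρ₀ θ)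
    (hper₁ : ∀ θ : ℝ, ρ₁ (θ + 2 * Real.pi) = ρ₁ θ)
    (hpos : ∀ θ, 0 < ρ₀ θ) (z : ℂ) :
    z ∈ radialAnnulus ρ₀ ρ₁ ↔
      z ≠ 0 ∧ ρ₀ (Complex.arg z) ≤ ‖z‖ ∧ ‖z‖ ≤ ρ₁ (Complex.arg z) := by
  constructor
  · rintro ⟨θ, r, h0, h1, rfl⟩
    have hr : 0 < r := lt_of_lt_of_le (hpos θ) h0
    refine ⟨polar_ne_zero hr, ?_, ?_⟩
    · rw [abs_polar hr.le, rho_arg_polar hper₀ hr]; exact h0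
    · rw [abs_polar hr.le, rho_arg_polar hper₁ hr]; exact h1
  · rintro ⟨hz, h0, h1⟩
    refine ⟨Complex.arg z, ‖z‖, h0, h1, ?_⟩
    rw [mul_comm Complex.I]
    exact (Complex.norm_mul_exp_arg_mul_I z).symm

lemma contOn_rho_arg {ρ : ℝ → ℝ} (hc : Continuous ρ)
    (hper : ∀ θ : ℝ, ρ (θ + 2 * Real.pi) = ρ θ) :
    ContinuousOn (fun z : ℂ => ρ (Complex.arg z)) {(0 : ℂ)}ᶜ := by
  have hP : Function.Periodic ρ (2 * Real.pi) := hper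
  have hl : Continuous hP.lift := hc.quotient_liftOn' _
  have key : (fun z : ℂ => ρ (Complex.arg z))
      = hP.lift ∘ (((↑) : ℝ → Real.Angle) ∘ Complex.arg) := by
    funext z
    exact (hP.lift_coe _).symm
  rw [key]
  intro z hz
  exact ((hl.continuousAt).comp
    (Complex.continuousAt_arg_coe_angle (by simpa using hz))).continuousWithinAt

lemma isOpen_outer {a : ℝ → ℝ} (hc : Continuous a)
    (hper : ∀ θ : ℝ, a (θ + 2 * Real.pi) = a θ) :
    IsOpen {z : ℂ | z ≠ 0 ∧ a (Complex.arg z) < ‖z‖} := by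
  have hf : ContinuousOn (fun z : ℂ => ‖z‖ - a (Complex.arg z)) {(0 : ℂ)}ᶜ :=
    (continuous_norm.continuousOn).sub (contOn_rho_arg hc hper)
  have := hf.isOpen_inter_preimage (isOpen_compl_singleton) (isOpen_Ioi (a := (0 : ℝ)))
  convert this using 1
  ext z
  simp only [mem_setOf_eq, mem_inter_iff, mem_compl_iff, mem_singleton_iff, mem_preimage,
    mem_Ioi, sub_pos]

lemma exists_lb {a : ℝ → ℝ} (hc : Continuous a)
    (hper : ∀ θ : ℝ, a (θ + 2 * Real.pi) = a θ) (hpos : ∀ θ, 0 < a θ) :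
    ∃ m > 0, ∀ θ, m ≤ a θ := by
  have hne : (Set.Icc (0 : ℝ) (2 * Real.pi)).Nonempty :=
    ⟨0, by constructor <;> [rfl; positivity]⟩
  obtain ⟨θ₀, hθ₀, hmin⟩ := isCompact_Icc.exists_isMinOn hne hc.continuousOn
  refine ⟨a θ₀, hpos θ₀, fun θ => ?_⟩
  obtain ⟨y, hy, hxy⟩ := (periodic_of a hper).exists_mem_Ico₀ (by positivity) θ
  rw [hxy]
  exact hmin (Set.Ico_subset_Icc_self hy)

lemma isOpen_inner {a : ℝ → ℝ} (hc : Continuous a)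
    (hper : ∀ θ : ℝ, a (θ + 2 * Real.pi) = a θ) (hpos : ∀ θ, 0 < a θ) :
    IsOpen {z : ℂ | z = 0 ∨ ‖z‖ < a (Complex.arg z)} := by
  obtain ⟨m, hm, hmle⟩ := exists_lb hc hper hpos
  have hf : ContinuousOn (fun z : ℂ => a (Complex.arg z) - ‖z‖) {(0 : ℂ)}ᶜ :=
    (contOn_rho_arg hc hper).sub (continuous_norm.continuousOn)
  have h2 := hf.isOpen_inter_preimage (isOpen_compl_singleton) (isOpen_Ioi (a := (0 : ℝ)))
  have key : {z : ℂ | z = 0 ∨ ‖z‖ < a (Complex.arg z)}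
      = Metric.ball (0 : ℂ) m ∪
        ({(0 : ℂ)}ᶜ ∩ (fun z : ℂ => a (Complex.arg z) - ‖z‖) ⁻¹' Set.Ioi 0) := by
    ext z
    simp only [mem_setOf_eq, mem_union, Metric.mem_ball, dist_zero_right, mem_inter_iff,
      mem_compl_iff, mem_singleton_iff, mem_preimage, mem_Ioi, sub_pos]
    constructor
    · rintro (rfl | h)
      · left; simpa using hm
      · by_cases hz : z = 0
        · left; subst hz; simpa using hm
        · right; exact ⟨hz, h⟩
    · rintro (h | ⟨hz, h⟩)
      · right; exact lt_of_lt_of_le h (hmle _)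
      · right; exact h
  rw [key]
  exact Metric.isOpen_ball.union h2

end RadialAux

open RadialAux

section Main

variable {ρ₀ ρ₁ : ℝ → ℝ}

/-- The core lemma: under the hypotheses, `T '' A ⊆ A`. -/
lemma image_annulus_subset
    (hc₀ : Continuous ρ₀) (hc₁ : Continuous ρ₁)
    (hper₀ : ∀ θ : ℝ, ρ₀ (θ + 2 * Real.pi) = ρ₀ θ)
    (hper₁ : ∀ θ : ℝ, ρ₁ (θ + 2 * Real.pi) = ρ₁ θ)
    (hpos : ∀ θ : ℝ, 0 < ρ₀ θ) (hlt : ∀ θ : ℝ, ρ₀ θ < ρ₁ θ)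
    (B : Set ℂ) (hBopen : IsOpen B) (hAB : radialAnnulus ρ₀ ρ₁ ⊆ B)
    (T S : ℂ → ℂ) (hTc : ContinuousOn T B) (hSc : ContinuousOn S B)
    (hTB : Set.MapsTo T B B)
    (hST : ∀ z ∈ B, S (T z) = z) (hTS : ∀ z ∈ B, T (S z) = z)
    (hγ₀ : T '' radialCurve ρ₀ = radialCurve ρ₀)
    (hγ₁ : T '' radialCurve ρ₁ = radialCurve ρ₁) :
    T '' radialAnnulus ρ₀ ρ₁ ⊆ radialAnnulus ρ₀ ρ₁ := by
  have hpos₁ : ∀ θ, 0 < ρ₁ θ := fun θ => (hpos θ).trans (hlt θ)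
  set A := radialAnnulus ρ₀ ρ₁ with hA
  set γ₀ := radialCurve ρ₀ with hg0
  set γ₁ := radialCurve ρ₁ with hg1
  set U : Set ℂ := {z | z ≠ 0 ∧ ρ₀ (Complex.arg z) < ‖z‖ ∧
    ‖z‖ < ρ₁ (Complex.arg z)} with hU
  set D : Set ℂ := {z | z = 0 ∨ ‖z‖ < ρ₀ (Complex.arg z)} with hD
  set E : Set ℂ := {z | z ≠ 0 ∧ ρ₁ (Complex.arg z) < ‖z‖} with hE
  -- basic inclusions
  have hγ₀A : γ₀ ⊆ A := by
    intro z hz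
    rw [mem_curve_iff hper₀ hpos] at hz
    rw [hA, mem_ann_iff hper₀ hper₁ hpos]
    exact ⟨hz.1, le_of_eq hz.2.symm, by rw [hz.2]; exact (hlt _).le⟩
  have hγ₁A : γ₁ ⊆ A := by
    intro z hz
    rw [mem_curve_iff hper₁ hpos₁] at hz
    rw [hA, mem_ann_iff hper₀ hper₁ hpos]
    exact ⟨hz.1, by rw [hz.2]; exact (hlt _).le, le_of_eq hz.2⟩
  have hUA : U ⊆ A := by
    intro z hz
    rw [hA, mem_ann_iff hper₀ hper₁ hpos]
    exact ⟨hz.1, hz.2.1.le, hz.2.2.le⟩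
  have hAeq : A = U ∪ (γ₀ ∪ γ₁) := by
    apply Set.Subset.antisymm
    · intro z hz
      rw [hA, mem_ann_iff hper₀ hper₁ hpos] at hz
      obtain ⟨hz0, h0, h1⟩ := hz
      rcases eq_or_lt_of_le h0 with h0' | h0'
      · exact Or.inr (Or.inl ((mem_curve_iff hper₀ hpos z).mpr ⟨hz0, h0'.symm⟩))
      rcases eq_or_lt_of_le h1 with h1' | h1'
      · exact Or.inr (Or.inr ((mem_curve_iff hper₁ hpos₁ z).mpr ⟨hz0, h1'⟩))
      exact Or.inl ⟨hz0, h0', h1'⟩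
    · rintro z (hz | hz | hz)
      exacts [hUA hz, hγ₀A hz, hγ₁A hz]
  -- disjointness of U with the curves
  have hUγ₀ : ∀ z ∈ U, z ∉ γ₀ := by
    intro z hz hz'
    rw [mem_curve_iff hper₀ hpos] at hz'
    have := hz.2.1
    rw [← hz'.2] at this
    exact lt_irrefl _ this
  have hUγ₁ : ∀ z ∈ U, z ∉ γ₁ := by
    intro z hz hz'
    rw [mem_curve_iff hper₁ hpos₁] at hz'
    have := hz.2.2
    rw [hz'.2] at this
    exact lt_irrefl _ this
  -- image of A
  have hTA : T '' A = T '' U ∪ (γ₀ ∪ γ₁) := by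
    rw [hAeq, Set.image_union, Set.image_union, hγ₀, hγ₁]
  -- openness
  have hUopen : IsOpen U := by
    have h1 := isOpen_outer hc₀ hper₀
    have h2 : IsOpen {z : ℂ | z = 0 ∨ ‖z‖ < ρ₁ (Complex.arg z)} :=
      isOpen_inner hc₁ hper₁ hpos₁
    have : U = {z : ℂ | z ≠ 0 ∧ ρ₀ (Complex.arg z) < ‖z‖} ∩
        {z : ℂ | z = 0 ∨ ‖z‖ < ρ₁ (Complex.arg z)} := by
      ext z
      simp only [hU, mem_setOf_eq, mem_inter_iff]
      constructor
      · rintro ⟨h0, h1, h2⟩; exact ⟨⟨h0, h1⟩, Or.inr h2⟩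
      · rintro ⟨⟨h0, h1⟩, (rfl | h2)⟩
        · exact absurd rfl h0
        · exact ⟨h0, h1, h2⟩
    rw [this]; exact h1.inter h2
  have hDopen : IsOpen D := isOpen_inner hc₀ hper₀ hpos
  have hEopen : IsOpen E := isOpen_outer hc₁ hper₁
  -- T '' U is preconnected
  have hAB' : A ⊆ B := hAB
  have hUB : U ⊆ B := fun z hz => hAB' (hUA hz)
  -- U is (pre)connected via parametrization
  have hF : Continuous (fun p : ℝ × ℝ =>
      (((1 - p.2) * ρ₀ p.1 + p.2 * ρ₁ p.1 : ℝ) : ℂ) * Complex.exp (Complex.I * (p.1 : ℂ))) := by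
    apply Continuous.mul
    · exact Complex.continuous_ofReal.comp
        (((continuous_const.sub continuous_snd).mul (hc₀.comp continuous_fst)).add
          (continuous_snd.mul (hc₁.comp continuous_fst)))
    · exact Complex.continuous_exp.comp (continuous_const.mul
        (Complex.continuous_ofReal.comp continuous_fst))
  have hUimage : U = (fun p : ℝ × ℝ =>
      (((1 - p.2) * ρ₀ p.1 + p.2 * ρ₁ p.1 : ℝ) : ℂ) * Complex.exp (Complex.I * (p.1 : ℂ))) ''
      (Set.univ ×ˢ Set.Ioo 0 1) := by
    ext z
    constructor
    · intro hz
      obtain ⟨hz0, h0, h1⟩ := hz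
      set θ := Complex.arg z
      set r := ‖z‖
      have hd : 0 < ρ₁ θ - ρ₀ θ := sub_pos.mpr (hlt θ)
      refine ⟨(θ, (r - ρ₀ θ) / (ρ₁ θ - ρ₀ θ)), ⟨trivial, ?_, ?_⟩, ?_⟩
      · exact div_pos (sub_pos.mpr h0) hd
      · rw [div_lt_one hd]; linarith
      · simp only
        have hr : ((1 - (r - ρ₀ θ) / (ρ₁ θ - ρ₀ θ)) * ρ₀ θ +
            (r - ρ₀ θ) / (ρ₁ θ - ρ₀ θ) * ρ₁ θ) = r := by
          field_simp
          ring
        rw [hr]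
        rw [mul_comm Complex.I]
        exact Complex.norm_mul_exp_arg_mul_I z
    · rintro ⟨⟨θ, t⟩, ⟨-, ht0, ht1⟩, rfl⟩
      set r := (1 - t) * ρ₀ θ + t * ρ₁ θ with hrdef
      have h0 : ρ₀ θ < r := by nlinarith [hlt θ]
      have h1 : r < ρ₁ θ := by nlinarith [hlt θ]
      have hrpos : 0 < r := (hpos θ).trans h0
      refine ⟨polar_ne_zero hrpos, ?_, ?_⟩
      · rw [abs_polar hrpos.le, rho_arg_polar hper₀ hrpos]; exact h0
      · rw [abs_polar hrpos.le, rho_arg_polar hper₁ hrpos]; exact h1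
  have hUconn : IsPreconnected U := by
    rw [hUimage]
    exact ((convex_univ.prod (convex_Ioo (0:ℝ) 1)).isPreconnected).image _ hF.continuousOn
  -- A is preconnected similarly
  have hAimage : A = (fun p : ℝ × ℝ =>
      (((1 - p.2) * ρ₀ p.1 + p.2 * ρ₁ p.1 : ℝ) : ℂ) * Complex.exp (Complex.I * (p.1 : ℂ))) ''
      (Set.univ ×ˢ Set.Icc 0 1) := by
    ext z
    constructor
    · intro hz
      rw [hA, mem_ann_iff hper₀ hper₁ hpos] at hz
      obtain ⟨hz0, h0, h1⟩ := hz
      set θ := Complex.arg z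
      set r := ‖z‖
      have hd : 0 < ρ₁ θ - ρ₀ θ := sub_pos.mpr (hlt θ)
      refine ⟨(θ, (r - ρ₀ θ) / (ρ₁ θ - ρ₀ θ)), ⟨trivial, ?_, ?_⟩, ?_⟩
      · exact div_nonneg (sub_nonneg.mpr h0) hd.le
      · rw [div_le_one hd]; linarith
      · simp only
        have hr : ((1 - (r - ρ₀ θ) / (ρ₁ θ - ρ₀ θ)) * ρ₀ θ +
            (r - ρ₀ θ) / (ρ₁ θ - ρ₀ θ) * ρ₁ θ) = r := by
          field_simp
          ring
        rw [hr]
        rw [mul_comm Complex.I]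
        exact Complex.norm_mul_exp_arg_mul_I z
    · rintro ⟨⟨θ, t⟩, ⟨-, ht0, ht1⟩, rfl⟩
      set r := (1 - t) * ρ₀ θ + t * ρ₁ θ with hrdef
      have h0 : ρ₀ θ ≤ r := by nlinarith [hlt θ]
      have h1 : r ≤ ρ₁ θ := by nlinarith [hlt θ]
      have hrpos : 0 < r := lt_of_lt_of_le (hpos θ) h0
      rw [hA, mem_ann_iff hper₀ hper₁ hpos]
      refine ⟨polar_ne_zero hrpos, ?_, ?_⟩
      · rw [abs_polar hrpos.le, rho_arg_polar hper₀ hrpos]; exact h0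
      · rw [abs_polar hrpos.le, rho_arg_polar hper₁ hrpos]; exact h1
  have hAconn : IsPreconnected A := by
    rw [hAimage]
    exact ((convex_univ.prod (convex_Icc (0:ℝ) 1)).isPreconnected).image _ hF.continuousOn
  -- T '' U avoids the curves
  have hTUavoid : ∀ z ∈ T '' U, z ∉ γ₀ ∧ z ∉ γ₁ := by
    rintro z ⟨w, hw, rfl⟩
    constructor
    · intro hz
      rw [← hγ₀] at hz
      obtain ⟨g, hg, hgz⟩ := hz
      have hwB : w ∈ B := hUB hw
      have hgB : g ∈ B := hAB' (hγ₀A hg)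
      have : w = g := by
        have h1 := hST w hwB
        have h2 := hST g hgB
        rw [hgz] at h2
        rw [← h1, h2]
      exact hUγ₀ w hw (this ▸ hg)
    · intro hz
      rw [← hγ₁] at hz
      obtain ⟨g, hg, hgz⟩ := hz
      have hwB : w ∈ B := hUB hw
      have hgB : g ∈ B := hAB' (hγ₁A hg)
      have : w = g := by
        have h1 := hST w hwB
        have h2 := hST g hgB
        rw [hgz] at h2
        rw [← h1, h2]
      exact hUγ₁ w hw (this ▸ hg)
  -- trichotomy: T '' U ⊆ D ∪ U ∪ E
  have hTUsub : T '' U ⊆ D ∪ (U ∪ E) := by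
    intro z hz
    obtain ⟨hz0, hz1⟩ := hTUavoid z hz
    by_cases h0 : z = 0
    · exact Or.inl (Or.inl h0)
    rcases lt_trichotomy (‖z‖) (ρ₀ (Complex.arg z)) with h | h | h
    · exact Or.inl (Or.inr h)
    · exact absurd ((mem_curve_iff hper₀ hpos z).mpr ⟨h0, h⟩) hz0
    rcases lt_trichotomy (‖z‖) (ρ₁ (Complex.arg z)) with h' | h' | h'
    · exact Or.inr (Or.inl ⟨h0, h, h'⟩)
    · exact absurd ((mem_curve_iff hper₁ hpos₁ z).mpr ⟨h0, h'⟩) hz1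
    · exact Or.inr (Or.inr ⟨h0, h'⟩)
  -- T '' U is preconnected
  have hTUconn : IsPreconnected (T '' U) := hUconn.image T (hTc.mono hUB)
  have hTAconn : IsPreconnected (T '' A) := hAconn.image T (hTc.mono hAB')
  -- dichotomy
  have hdicho : T '' U ⊆ U ∨ T '' U ⊆ D ∪ E := by
    have hdisj : Disjoint U (D ∪ E) := by
      rw [Set.disjoint_union_right]
      constructor
      · rw [Set.disjoint_left]
        rintro z ⟨hz0, h1, h2⟩ (rfl | h)
        · exact hz0 rfl
        · exact absurd h (not_lt.mpr h1.le)
      · rw [Set.disjoint_left]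
        rintro z ⟨hz0, h1, h2⟩ ⟨_, h⟩
        exact absurd h (not_lt.mpr h2.le)
    have hcov : T '' U ⊆ U ∪ (D ∪ E) := by
      intro z hz
      rcases hTUsub hz with h | h | h
      exacts [Or.inr (Or.inl h), Or.inl h, Or.inr (Or.inr h)]
    exact hTUconn.subset_or_subset hUopen (hDopen.union hEopen) hdisj hcov
  rcases hdicho with hcase | hcase
  · -- good case
    rw [hTA]
    rw [hAeq]
    exact Set.union_subset_union_left _ hcase
  · -- bad case: contradiction via connectedness of T '' A
    exfalso
    set u : Set ℂ := {z : ℂ | z = 0 ∨ ‖z‖ < ρ₁ (Complex.arg z)} with hu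
    set v : Set ℂ := {z : ℂ | z ≠ 0 ∧ ρ₀ (Complex.arg z) < ‖z‖} with hv
    have huopen : IsOpen u := isOpen_inner hc₁ hper₁ hpos₁
    have hvopen : IsOpen v := isOpen_outer hc₀ hper₀
    have hcover : T '' A ⊆ u ∪ v := by
      rw [hTA]
      rintro z (hz | hz | hz)
      · rcases hcase hz with h | h
        · rcases h with rfl | h
          · exact Or.inl (Or.inl rfl)
          · exact Or.inl (Or.inr (h.trans ((hlt _))))
        · exact Or.inr ⟨h.1, (hlt _).trans h.2⟩
      · rw [mem_curve_iff hper₀ hpos] at hz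
        exact Or.inl (Or.inr (hz.2 ▸ hlt _))
      · rw [mem_curve_iff hper₁ hpos₁] at hz
        exact Or.inr ⟨hz.1, hz.2 ▸ hlt _⟩
    have hγ₀ne : ∃ z, z ∈ γ₀ := ⟨(ρ₀ 0 : ℂ) * Complex.exp (Complex.I * (0 : ℂ)), 0, rfl⟩
    have hγ₁ne : ∃ z, z ∈ γ₁ := ⟨(ρ₁ 0 : ℂ) * Complex.exp (Complex.I * (0 : ℂ)), 0, rfl⟩
    obtain ⟨z₀, hz₀⟩ := hγ₀ne
    obtain ⟨z₁, hz₁⟩ := hγ₁ne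
    have hz₀TA : z₀ ∈ T '' A := by rw [hTA]; exact Or.inr (Or.inl hz₀)
    have hz₁TA : z₁ ∈ T '' A := by rw [hTA]; exact Or.inr (Or.inr hz₁)
    have hz₀u : z₀ ∈ u := by
      rw [mem_curve_iff hper₀ hpos] at hz₀
      exact Or.inr (hz₀.2 ▸ hlt _)
    have hz₁v : z₁ ∈ v := by
      rw [mem_curve_iff hper₁ hpos₁] at hz₁
      exact ⟨hz₁.1, hz₁.2 ▸ hlt _⟩
    obtain ⟨x, hxTA, hxu, hxv⟩ := hTAconn u v huopen hvopen hcover ⟨z₀, hz₀TA, hz₀u⟩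
      ⟨z₁, hz₁TA, hz₁v⟩
    -- x ∈ u ∩ v means x ∈ U
    have hxU : x ∈ U := by
      obtain ⟨hx0, hx1⟩ := hxv
      rcases hxu with rfl | hxu
      · exact absurd rfl hx0
      · exact ⟨hx0, hx1, hxu⟩
    -- but T '' A is disjoint from U
    rw [hTA] at hxTA
    rcases hxTA with hx | hx | hx
    · rcases hcase hx with h | h
      · rcases h with rfl | h
        · exact hxU.1 rfl
        · exact absurd h (not_lt.mpr hxU.2.1.le)
      · exact absurd h.2 (not_lt.mpr hxU.2.2.le)
    · exact hUγ₀ x hxU hx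
    · exact hUγ₁ x hxU hx

end Main

/-- Topological lemma: if a homeomorphism `T` of an open set `B` containing the annulus
`A` bounded by the closed radial curves `γ₀` and `γ₁` preserves each boundary curve,
then it preserves the annulus: `T(A) = A`. -/
theorem annulus_invariant_of_boundary_invariant
    (ρ₀ ρ₁ : ℝ → ℝ) (hc₀ : Continuous ρ₀) (hc₁ : Continuous ρ₁)
    (hper₀ : ∀ θ : ℝ, ρ₀ (θ + 2 * Real.pi) = ρ₀ θ)
    (hper₁ : ∀ θ : ℝ, ρ₁ (θ + 2 * Real.pi) = ρ₁ θ)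
    (hpos : ∀ θ : ℝ, 0 < ρ₀ θ) (hlt : ∀ θ : ℝ, ρ₀ θ < ρ₁ θ)
    (B : Set ℂ) (hBopen : IsOpen B) (hAB : radialAnnulus ρ₀ ρ₁ ⊆ B)
    (T S : ℂ → ℂ) (hTc : ContinuousOn T B) (hSc : ContinuousOn S B)
    (hTB : Set.MapsTo T B B) (hSB : Set.MapsTo S B B)
    (hST : ∀ z ∈ B, S (T z) = z) (hTS : ∀ z ∈ B, T (S z) = z)
    (hγ₀ : T '' radialCurve ρ₀ = radialCurve ρ₀)
    (hγ₁ : T '' radialCurve ρ₁ = radialCurve ρ₁) :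
    T '' radialAnnulus ρ₀ ρ₁ = radialAnnulus ρ₀ ρ₁ := by
  have hγ₀B : radialCurve ρ₀ ⊆ B := by
    intro z hz
    apply hAB
    rw [RadialAux.mem_curve_iff hper₀ hpos] at hz
    rw [RadialAux.mem_ann_iff hper₀ hper₁ hpos]
    exact ⟨hz.1, le_of_eq hz.2.symm, by rw [hz.2]; exact (hlt _).le⟩
  have hγ₁B : radialCurve ρ₁ ⊆ B := by
    intro z hz
    apply hAB
    have hpos₁ : ∀ θ, 0 < ρ₁ θ := fun θ => (hpos θ).trans (hlt θ)
    rw [RadialAux.mem_curve_iff hper₁ hpos₁] at hz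
    rw [RadialAux.mem_ann_iff hper₀ hper₁ hpos]
    exact ⟨hz.1, by rw [hz.2]; exact (hlt _).le, le_of_eq hz.2⟩
  have hSγ₀ : S '' radialCurve ρ₀ = radialCurve ρ₀ := by
    conv_lhs => rw [← hγ₀]
    rw [← Set.image_comp]
    rw [show S ∘ T = fun z => S (T z) from rfl]
    rw [Set.image_congr (fun x hx => hST x (hγ₀B hx))]
    exact Set.image_id _
  have hSγ₁ : S '' radialCurve ρ₁ = radialCurve ρ₁ := by
    conv_lhs => rw [← hγ₁]
    rw [← Set.image_comp]
    rw [show S ∘ T = fun z => S (T z) from rfl]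
    rw [Set.image_congr (fun x hx => hST x (hγ₁B hx))]
    exact Set.image_id _
  have h1 : T '' radialAnnulus ρ₀ ρ₁ ⊆ radialAnnulus ρ₀ ρ₁ :=
    image_annulus_subset hc₀ hc₁ hper₀ hper₁ hpos hlt B hBopen hAB T S hTc hSc hTB hST hTS hγ₀ hγ₁
  have h2 : S '' radialAnnulus ρ₀ ρ₁ ⊆ radialAnnulus ρ₀ ρ₁ :=
    image_annulus_subset hc₀ hc₁ hper₀ hper₁ hpos hlt B hBopen hAB S T hSc hTc hSB hTS hST hSγ₀ hSγ₁
  apply Set.Subset.antisymm h1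
  intro z hz
  have hzB : z ∈ B := hAB hz
  have hSz : S z ∈ radialAnnulus ρ₀ ρ₁ := h2 ⟨z, hz, rfl⟩
  exact ⟨S z, hSz, hTS z hzB⟩
end
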